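/- Let k > l be natural numbers with Δ = k − l ≥ 1, fix n₀ with l ≤ n₀ < k, and set γ_r = β^{lk}_{n₀+rΔ}. Then the ratio γ_{r+1}/γ_{r+2} satisfies γ_{r+1}/γ_{r+2} = 1 − (k+l)/(2r) + o(1/r) as r → ∞; that is, lim_{r→∞} r·(γ_{r+1}/γ_{r+2} − 1 + (k+l)/(2r)) = 0. -/

import Mathlib

open Filter Finset Real

/-- Pochhammer symbol `(x,s) = x(x+1)⋯(x+s-1)` for an integer starting value. -/
def poch (x : ℤ) (s : ℕ) : ℤ := ∏ i ∈ Finset.range s, (x + i)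

/-- `β^{kl}_n = sqrt((n-l+1,l)·(n-l+1,k))`; `betaKL l k n` is `β^{lk}_n`. -/
noncomputable def betaKL (k l n : ℕ) : ℝ :=
  Real.sqrt (((poch ((n : ℤ) - l + 1) l * poch ((n : ℤ) - l + 1) k : ℤ) : ℝ))

noncomputable def pochR (x : ℝ) (s : ℕ) : ℝ := ∏ i ∈ Finset.range s, (x + i)

lemma pochR_cast (x : ℤ) (s : ℕ) : ((poch x s : ℤ) : ℝ) = pochR (x : ℝ) s := by
  unfold poch pochR; push_cast; rfl

lemma pochR_pos {x : ℝ} (hx : 0 < x) (s : ℕ) : 0 < pochR x s := by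
  unfold pochR; exact Finset.prod_pos fun i _ => by positivity

lemma pochR_add (x : ℝ) (s d : ℕ) : pochR x (s + d) = pochR x s * pochR (x + s) d := by
  unfold pochR; rw [Finset.prod_range_add]
  congr 1
  exact Finset.prod_congr rfl fun i _ => by push_cast; ring

lemma sqrt_prod' (s : Finset ℕ) (f : ℕ → ℝ) (h : ∀ i ∈ s, 0 ≤ f i) :
    Real.sqrt (∏ i ∈ s, f i) = ∏ i ∈ s, Real.sqrt (f i) := by
  induction s using Finset.induction with
  | empty => simp
  | insert _ _ hni ih =>
    rename_i a s
    rw [Finset.prod_insert hni, Finset.prod_insert hni,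
      Real.sqrt_mul (h a (Finset.mem_insert_self a s)),
      ih fun i hi => h i (Finset.mem_insert_of_mem hi)]

lemma ratio_eq (k l n₀ : ℕ) (hlk : l < k) (hn₀l : l ≤ n₀) (r : ℕ) :
    betaKL l k (n₀ + (r + 1) * (k - l)) / betaKL l k (n₀ + (r + 2) * (k - l))
      = ∏ j ∈ Finset.range (k - l),
          (((n₀ : ℝ) + (r + 1) * ((k - l : ℕ) : ℝ) - k + 1 + j)
            / Real.sqrt (((n₀ : ℝ) + (r + 1) * ((k - l : ℕ) : ℝ) - k + 1 + j + k)
                * ((n₀ : ℝ) + (r + 1) * ((k - l : ℕ) : ℝ) - k + 1 + j + l))) := by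
  set Δ : ℕ := k - l with hΔ
  set A : ℝ := (n₀ : ℝ) + (r + 1) * (Δ : ℝ) - k + 1 with hA
  have hΔk : l + Δ = k := by omega
  have hApos : (1 : ℝ) ≤ A := by
    have h1 : k ≤ n₀ + (r + 1) * Δ := by
      have h2 : Δ ≤ (r + 1) * Δ := Nat.le_mul_of_pos_left Δ (by omega)
      omega
    have : (k : ℝ) ≤ (n₀ : ℝ) + (r + 1) * (Δ : ℝ) := by
      calc (k : ℝ) ≤ ((n₀ + (r + 1) * Δ : ℕ) : ℝ) := by exact_mod_cast h1
        _ = (n₀ : ℝ) + (r + 1) * (Δ : ℝ) := by push_cast; ring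
    simp only [hA]; linarith
  have hApos' : (0 : ℝ) < A := by linarith
  have hb1 : betaKL l k (n₀ + (r + 1) * Δ) = Real.sqrt (pochR A k * pochR A l) := by
    unfold betaKL
    rw [Int.cast_mul, pochR_cast, pochR_cast]
    congr 2 <;> (push_cast [hA]; ring)
  have hb2 : betaKL l k (n₀ + (r + 2) * Δ) = Real.sqrt (pochR (A + Δ) k * pochR (A + Δ) l) := by
    unfold betaKL
    rw [Int.cast_mul, pochR_cast, pochR_cast]
    congr 2 <;> (push_cast [hA]; ring)
  set X := pochR A k * pochR A l with hX
  set Y := pochR (A + Δ) k * pochR (A + Δ) l with hY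
  set N := pochR A Δ with hN
  set D1 := pochR (A + k) Δ with hD1
  set D2 := pochR (A + l) Δ with hD2
  have hXpos : 0 < X := mul_pos (pochR_pos hApos' _) (pochR_pos hApos' _)
  have hYpos : 0 < Y := mul_pos (pochR_pos (by positivity) _) (pochR_pos (by positivity) _)
  have hNpos : 0 < N := pochR_pos hApos' _
  have hD1pos : 0 < D1 := pochR_pos (by positivity) _
  have hD2pos : 0 < D2 := pochR_pos (by positivity) _
  have key : X * (D1 * D2) = N ^ 2 * Y := by
    have e1 := pochR_add A k Δ
    have e2 := pochR_add A l Δ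
    have e3 := pochR_add A Δ k
    have e4 := pochR_add A Δ l
    have e5 : pochR A (k + Δ) = pochR A (Δ + k) := by rw [Nat.add_comm]
    have e6 : pochR A (l + Δ) = pochR A (Δ + l) := by rw [Nat.add_comm]
    rw [hX, hY, hN, hD1, hD2]
    calc pochR A k * pochR A l * (pochR (A + k) Δ * pochR (A + l) Δ)
        = (pochR A k * pochR (A + k) Δ) * (pochR A l * pochR (A + l) Δ) := by ring
      _ = pochR A (k + Δ) * pochR A (l + Δ) := by rw [e1, e2]
      _ = pochR A (Δ + k) * pochR A (Δ + l) := by rw [e5, e6]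
      _ = (pochR A Δ * pochR (A + Δ) k) * (pochR A Δ * pochR (A + Δ) l) := by rw [e3, e4]
      _ = pochR A Δ ^ 2 * (pochR (A + Δ) k * pochR (A + Δ) l) := by ring
  have hXY : X / Y = N ^ 2 / (D1 * D2) := by
    rw [div_eq_div_iff hYpos.ne' (by positivity)]
    linarith [key]
  have lhs_eq : betaKL l k (n₀ + (r + 1) * Δ) / betaKL l k (n₀ + (r + 2) * Δ)
      = N / Real.sqrt (D1 * D2) := by
    rw [hb1, hb2, ← Real.sqrt_div hXpos.le, hXY, Real.sqrt_div (by positivity : (0:ℝ) ≤ N ^ 2),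
      Real.sqrt_sq hNpos.le]
  rw [lhs_eq]
  rw [Finset.prod_div_distrib]
  have hNprod : N = ∏ j ∈ Finset.range Δ, (A + j) := rfl
  have hDprod : Real.sqrt (D1 * D2) = ∏ j ∈ Finset.range Δ, Real.sqrt ((A + j + k) * (A + j + l)) := by
    have h : D1 * D2 = ∏ j ∈ Finset.range Δ, ((A + j + k) * (A + j + l)) := by
      rw [Finset.prod_mul_distrib, hD1, hD2]
      unfold pochR
      congr 1 <;> exact Finset.prod_congr rfl fun i _ => by ring
    rw [h, sqrt_prod']
    intro i _
    positivity
  rw [hNprod, hDprod]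

lemma tendstoG (kk ll : ℝ) (hk : 0 ≤ kk) (hl : 0 ≤ ll) :
    Tendsto (fun t : ℝ => t * (t / Real.sqrt ((t + kk) * (t + ll)) - 1)) atTop
      (nhds (-(kk + ll) / 2)) := by
  have heq : ∀ᶠ t in atTop, (-(kk + ll) - kk * ll / t) /
        (Real.sqrt ((1 + kk / t) * (1 + ll / t)) * (1 + Real.sqrt ((1 + kk / t) * (1 + ll / t))))
      = t * (t / Real.sqrt ((t + kk) * (t + ll)) - 1) := by
    filter_upwards [eventually_ge_atTop (1 : ℝ)] with t ht
    have ht0 : (0 : ℝ) < t := lt_of_lt_of_le one_pos ht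
    set u := Real.sqrt ((1 + kk / t) * (1 + ll / t)) with hu
    have harg : (0:ℝ) ≤ (1 + kk / t) * (1 + ll / t) := by positivity
    have h12 : (1:ℝ) ≤ (1 + kk / t) * (1 + ll / t) := by
      nlinarith [div_nonneg hk ht0.le, div_nonneg hl ht0.le]
    have hu1 : (1 : ℝ) ≤ u := by
      rw [hu]
      calc (1:ℝ) = Real.sqrt 1 := by simp
        _ ≤ _ := Real.sqrt_le_sqrt h12
    have hu0 : (0 : ℝ) < u := lt_of_lt_of_le one_pos hu1
    have hu2 : u ^ 2 = (1 + kk / t) * (1 + ll / t) := Real.sq_sqrt harg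
    have hS : Real.sqrt ((t + kk) * (t + ll)) = t * u := by
      have h : (t + kk) * (t + ll) = t ^ 2 * ((1 + kk / t) * (1 + ll / t)) := by
        field_simp
      rw [h, Real.sqrt_mul (by positivity), Real.sqrt_sq ht0.le, hu]
    rw [hS]
    rw [div_eq_iff (by positivity : Real.sqrt ((1 + kk/t)*(1 + ll/t)) * (1 + Real.sqrt ((1 + kk/t)*(1 + ll/t))) ≠ 0)]
    rw [← hu]
    have step1 : t * (t / (t * u) - 1) * (u * (1 + u)) = t - t * u ^ 2 := by
      field_simp; ring
    rw [step1, hu2]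
    field_simp
    ring
  have hinv : Tendsto (fun t : ℝ => t⁻¹) atTop (nhds 0) := tendsto_inv_atTop_zero
  have h1 : Tendsto (fun t : ℝ => 1 + kk / t) atTop (nhds 1) := by
    have := hinv.const_mul kk
    simp only [mul_zero] at this
    have h := tendsto_const_nhds.add this (α := ℝ) (f := fun _ : ℝ => (1:ℝ))
    simpa [div_eq_mul_inv] using h
  have h2 : Tendsto (fun t : ℝ => 1 + ll / t) atTop (nhds 1) := by
    have := hinv.const_mul ll
    simp only [mul_zero] at this
    have h := tendsto_const_nhds.add this (α := ℝ) (f := fun _ : ℝ => (1:ℝ))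
    simpa [div_eq_mul_inv] using h
  have hu : Tendsto (fun t : ℝ => Real.sqrt ((1 + kk / t) * (1 + ll / t))) atTop (nhds 1) := by
    have := (Real.continuous_sqrt.tendsto ((1:ℝ)*1)).comp (h1.mul h2)
    simp only [mul_one, Real.sqrt_one] at this
    exact this
  have hnum : Tendsto (fun t : ℝ => -(kk + ll) - kk * ll / t) atTop (nhds (-(kk + ll))) := by
    have := hinv.const_mul (kk * ll)
    simp only [mul_zero] at this
    have h := tendsto_const_nhds.sub this (f := fun _ : ℝ => -(kk + ll))
    simpa [div_eq_mul_inv] using h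
  have hden : Tendsto (fun t : ℝ => Real.sqrt ((1 + kk / t) * (1 + ll / t)) *
      (1 + Real.sqrt ((1 + kk / t) * (1 + ll / t)))) atTop (nhds 2) := by
    have h := hu.mul (((tendsto_const_nhds : Tendsto (fun _ : ℝ => (1:ℝ)) atTop (nhds 1))).add hu)
    norm_num at h
    exact h
  have := hnum.div hden (by norm_num)
  exact this.congr' heq

lemma tendsto_aux (c d kk ll : ℝ) (hc : 0 < c) (hk : 0 ≤ kk) (hl : 0 ≤ ll) :
    Tendsto (fun r : ℕ => (r : ℝ) *
        ((c * r + d) / Real.sqrt ((c * r + d + kk) * (c * r + d + ll)) - 1)) atTop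
      (nhds ((1 / c) * (-(kk + ll) / 2))) := by
  have hT : Tendsto (fun r : ℕ => c * (r : ℝ) + d) atTop atTop := by
    apply Filter.tendsto_atTop_add_const_right
    exact (tendsto_natCast_atTop_atTop).const_mul_atTop hc
  have h1 : Tendsto (fun r : ℕ => (c * (r:ℝ) + d) *
      ((c * r + d) / Real.sqrt ((c * r + d + kk) * (c * r + d + ll)) - 1)) atTop
      (nhds (-(kk + ll) / 2)) := (tendstoG kk ll hk hl).comp hT
  have h2 : Tendsto (fun r : ℕ => (r : ℝ) / (c * r + d)) atTop (nhds (1 / c)) := by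
    have hlim : Tendsto (fun r : ℕ => 1 / (c + d * (1 / (r:ℝ)))) atTop (nhds (1 / c)) := by
      have hd : Tendsto (fun r : ℕ => c + d * (1 / (r:ℝ))) atTop (nhds c) := by
        have := tendsto_one_div_atTop_nhds_zero_nat.const_mul d
        have h := (tendsto_const_nhds : Tendsto (fun _ : ℕ => c) atTop (nhds c)).add this
        simpa using h
      simpa [one_div] using hd.inv₀ hc.ne'
    apply hlim.congr'
    filter_upwards [eventually_ge_atTop 1, hT.eventually_gt_atTop 0] with r hr hTr
    have hr0 : (r : ℝ) ≠ 0 := by positivity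
    field_simp
  have h := h2.mul h1
  apply h.congr'
  filter_upwards [eventually_ge_atTop 1, hT.eventually_gt_atTop 0] with r hr hTr
  rw [← mul_assoc, div_mul_cancel₀ _ hTr.ne']

lemma tendsto_one_of (f : ℕ → ℝ) (L : ℝ)
    (h : Tendsto (fun r : ℕ => (r : ℝ) * (f r - 1)) atTop (nhds L)) :
    Tendsto f atTop (nhds 1) := by
  have hlim : Tendsto (fun r : ℕ => 1 + (1 / (r:ℝ)) * ((r:ℝ) * (f r - 1))) atTop (nhds 1) := by
    have := tendsto_one_div_atTop_nhds_zero_nat.mul h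
    have h2 := (tendsto_const_nhds : Tendsto (fun _ : ℕ => (1:ℝ)) atTop (nhds 1)).add this
    simpa using h2
  apply hlim.congr'
  filter_upwards [eventually_ge_atTop 1] with r hr
  have hr0 : (r : ℝ) ≠ 0 := by positivity
  field_simp
  ring

lemma prod_tendsto (s : Finset ℕ) (f : ℕ → ℕ → ℝ) (A : ℕ → ℝ)
    (h : ∀ i ∈ s, Tendsto (fun r : ℕ => (r : ℝ) * (f i r - 1)) atTop (nhds (A i))) :
    Tendsto (fun r : ℕ => (r : ℝ) * ((∏ i ∈ s, f i r) - 1)) atTop (nhds (∑ i ∈ s, A i)) := by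
  induction s using Finset.induction with
  | empty => simpa using (tendsto_const_nhds : Tendsto (fun _ : ℕ => (0:ℝ)) atTop (nhds 0))
  | insert _ _ hni ih =>
    rename_i a s
    rw [Finset.sum_insert hni]
    have hfa := h a (Finset.mem_insert_self a s)
    have hP := ih fun i hi => h i (Finset.mem_insert_of_mem hi)
    have hP1 : Tendsto (fun r => ∏ i ∈ s, f i r) atTop (nhds 1) := tendsto_one_of _ _ hP
    have heq : (fun r : ℕ => (r : ℝ) * ((∏ i ∈ insert a s, f i r) - 1))
        = fun r : ℕ => ((r:ℝ) * (f a r - 1)) * (∏ i ∈ s, f i r) + (r:ℝ) * ((∏ i ∈ s, f i r) - 1) := by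
      funext r
      rw [Finset.prod_insert hni]
      ring
    rw [heq]
    simpa using (hfa.mul hP1).add hP

/-- With `γ_r = β^{lk}_{n₀+rΔ}`:
`γ_{r+1}/γ_{r+2} = 1 − (k+l)/(2r) + o(1/r)` as `r → ∞`. -/
theorem stmt9 (k l n₀ : ℕ) (hlk : l < k) (hn₀l : l ≤ n₀) (hn₀k : n₀ < k) :
    Filter.Tendsto (fun r : ℕ =>
      (r : ℝ) * (betaKL l k (n₀ + (r + 1) * (k - l)) / betaKL l k (n₀ + (r + 2) * (k - l))
        - 1 + ((k : ℝ) + l) / (2 * r)))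
      Filter.atTop (nhds 0) := by
  set c : ℝ := ((k - l : ℕ) : ℝ) with hc
  have hcpos : (0 : ℝ) < c := by
    rw [hc]
    exact_mod_cast Nat.sub_pos_of_lt hlk
  set d : ℕ → ℝ := fun j => (n₀ : ℝ) + c - k + 1 + j with hd
  set f : ℕ → ℕ → ℝ := fun j r =>
    (c * r + d j) / Real.sqrt ((c * r + d j + k) * (c * r + d j + l)) with hf
  have hj : ∀ j ∈ Finset.range (k - l),
      Tendsto (fun r : ℕ => (r : ℝ) * (f j r - 1)) atTop
        (nhds ((1 / c) * (-(((k:ℝ)) + (l:ℝ)) / 2))) := fun j _ =>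
    tendsto_aux c (d j) k l hcpos (Nat.cast_nonneg k) (Nat.cast_nonneg l)
  have hprod := prod_tendsto (Finset.range (k - l)) f
    (fun _ => (1 / c) * (-(((k:ℝ)) + (l:ℝ)) / 2)) hj
  have hsum : ∑ _j ∈ Finset.range (k - l), ((1 / c) * (-(((k:ℝ)) + (l:ℝ)) / 2))
      = -(((k:ℝ)) + (l:ℝ)) / 2 := by
    rw [Finset.sum_const, Finset.card_range, nsmul_eq_mul, ← hc]
    field_simp
  rw [hsum] at hprod
  have hfin := hprod.add
    (tendsto_const_nhds : Tendsto (fun _ : ℕ => ((k:ℝ) + l) / 2) atTop (nhds (((k:ℝ) + l) / 2)))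
  have hzero : -(((k:ℝ)) + (l:ℝ)) / 2 + ((k:ℝ) + l) / 2 = 0 := by ring
  rw [hzero] at hfin
  apply hfin.congr'
  filter_upwards [eventually_ge_atTop 1] with r hr
  have hr0 : (r : ℝ) ≠ 0 := by positivity
  have hre := ratio_eq k l n₀ hlk hn₀l r
  have hterm : ∀ j : ℕ, (n₀ : ℝ) + ((r:ℝ) + 1) * ((k - l : ℕ) : ℝ) - k + 1 + j
      = c * (r:ℝ) + d j := by
    intro j
    simp only [hd, hc]
    ring
  have hpe : (∏ j ∈ Finset.range (k - l),
        (((n₀ : ℝ) + (r + 1) * ((k - l : ℕ) : ℝ) - k + 1 + j)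
          / Real.sqrt (((n₀ : ℝ) + (r + 1) * ((k - l : ℕ) : ℝ) - k + 1 + j + k)
              * ((n₀ : ℝ) + (r + 1) * ((k - l : ℕ) : ℝ) - k + 1 + j + l))))
      = ∏ j ∈ Finset.range (k - l), f j r :=
    Finset.prod_congr rfl fun j _ => by rw [hterm j]
  rw [hre, hpe]
  field_simp
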